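/- Let m ≥ 3 and let g be the Minkowski bilinear form on ℝ^m. Let v ∈ ℝ^m be a nonzero null vector, P = v^⊥, and let ω₀ be the alternating bilinear form on P × P defined by ω₀((a₁, b₁), (a₂, b₂)) = g(a₁, b₂) − g(a₂, b₁). Let R be the subspace of P × P spanned by (v, 0) and (0, v). Then ω₀ descends to a well-defined nondegenerate alternating bilinear form on the quotient space (P × P) / R, and this quotient has dimension 2m − 4. -/

import Mathlib

open Module

/-- The Minkowski bilinear form on `ℝ^m = (Fin m → ℝ)`:
`g(x, y) = −x₀·y₀ + Σ_{i=1}^{m−1} xᵢ·yᵢ`. -/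
noncomputable def mink {m : ℕ} (x y : Fin m → ℝ) : ℝ :=
  ∑ i : Fin m, (if (i : ℕ) = 0 then -(x i * y i) else x i * y i)

/-- The `g`-orthogonal subspace `v^⊥ = {u ∈ ℝ^m : g(v, u) = 0}` of a vector `v`. -/
def minkOrtho {m : ℕ} (v : Fin m → ℝ) : Submodule ℝ (Fin m → ℝ) where
  carrier := {u | mink v u = 0}
  zero_mem' := by
    simp [mink]
  add_mem' := by
    intro a b ha hb
    have h : mink v (a + b) = mink v a + mink v b := by
      simp only [mink, Pi.add_apply, mul_add, neg_add, ← Finset.sum_add_distrib]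
      apply Finset.sum_congr rfl
      intro i _
      by_cases h : (i : ℕ) = 0 <;> simp [h]
    simp only [Set.mem_setOf_eq] at *
    rw [h, ha, hb, add_zero]
  smul_mem' := by
    intro c a ha
    have h : mink v (c • a) = c * mink v a := by
      simp only [mink, Pi.smul_apply, smul_eq_mul, Finset.mul_sum]
      apply Finset.sum_congr rfl
      intro i _
      by_cases h : (i : ℕ) = 0 <;> simp [h] <;> ring
    simp only [Set.mem_setOf_eq] at *
    rw [h, ha, mul_zero]

lemma mink_comm {m : ℕ} (x y : Fin m → ℝ) : mink x y = mink y x := by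
  unfold mink; apply Finset.sum_congr rfl; intro i _
  by_cases h : (i:ℕ) = 0 <;> simp [h, mul_comm]

lemma mink_add_left {m : ℕ} (x y z : Fin m → ℝ) : mink (x+y) z = mink x z + mink y z := by
  unfold mink; rw [← Finset.sum_add_distrib]; apply Finset.sum_congr rfl; intro i _
  by_cases h : (i:ℕ) = 0 <;> simp [h] <;> ring

lemma mink_smul_left {m : ℕ} (c : ℝ) (x z : Fin m → ℝ) : mink (c • x) z = c * mink x z := by
  unfold mink; rw [Finset.mul_sum]; apply Finset.sum_congr rfl; intro i _
  by_cases h : (i:ℕ) = 0 <;> simp [h] <;> ring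

lemma mink_zero_left {m : ℕ} (z : Fin m → ℝ) : mink 0 z = 0 := by
  unfold mink; apply Finset.sum_eq_zero; intro i _
  by_cases h : (i:ℕ) = 0 <;> simp [h]

lemma mink_zero_right {m : ℕ} (z : Fin m → ℝ) : mink z 0 = 0 := by
  rw [mink_comm]; exact mink_zero_left z

lemma mink_sub_left {m : ℕ} (x y z : Fin m → ℝ) : mink (x - y) z = mink x z - mink y z := by
  have := mink_add_left (x - y) y z
  rw [sub_add_cancel] at this; linarith

noncomputable def minkL {m : ℕ} : (Fin m → ℝ) →ₗ[ℝ] (Fin m → ℝ) →ₗ[ℝ] ℝ :=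
  LinearMap.mk₂ ℝ mink mink_add_left mink_smul_left
    (fun x y z => by rw [mink_comm, mink_add_left, mink_comm y x, mink_comm z x])
    (fun c x y => by rw [mink_comm, mink_smul_left, mink_comm y x, smul_eq_mul])

lemma mink_self_zero {m : ℕ} (w : Fin m → ℝ) (h0 : ∀ i : Fin m, (i:ℕ) = 0 → w i = 0)
    (hq : mink w w = 0) : w = 0 := by
  have hterm : ∀ i : Fin m, (if (i : ℕ) = 0 then -(w i * w i) else w i * w i) = w i * w i := by
    intro i
    by_cases h : (i:ℕ) = 0
    · simp [h, h0 i h]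
    · simp [h]
  unfold mink at hq
  simp only [hterm] at hq
  have := (Finset.sum_eq_zero_iff_of_nonneg (fun i _ => mul_self_nonneg (w i))).mp hq
  funext i
  have := this i (Finset.mem_univ i)
  have : w i = 0 := by nlinarith
  simpa using this

lemma v0_ne {m : ℕ} (hm : 0 < m) (v : Fin m → ℝ) (hvnull : mink v v = 0) (hv : v ≠ 0) :
    v ⟨0, hm⟩ ≠ 0 := by
  intro h0
  apply hv
  apply mink_self_zero v _ hvnull
  intro i hi
  have : i = ⟨0, hm⟩ := Fin.ext hi
  rw [this]; exact h0

lemma key_radical {m : ℕ} (hm : 0 < m) (v : Fin m → ℝ) (hvnull : mink v v = 0) (hv : v ≠ 0)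
    (u : Fin m → ℝ) (hu : mink v u = 0)
    (hrad : ∀ w, mink v w = 0 → mink u w = 0) : ∃ c : ℝ, u = c • v := by
  set i0 : Fin m := ⟨0, hm⟩
  have hv0 := v0_ne hm v hvnull hv
  set c : ℝ := u i0 / v i0 with hc
  refine ⟨c, ?_⟩
  set w : Fin m → ℝ := u - c • v with hw
  have hvw : mink v w = 0 := by
    rw [hw, mink_comm, mink_sub_left, mink_smul_left, mink_comm u v, hu, hvnull]
    ring
  have hww : mink w w = 0 := by
    have h1 : mink u w = 0 := hrad w hvw
    rw [hw, mink_sub_left, mink_smul_left, h1]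
    rw [← hw, hvw]; ring
  have hw0 : w = 0 := by
    apply mink_self_zero w _ hww
    intro i hi
    have : i = i0 := Fin.ext hi
    rw [this, hw]
    simp [hc, Pi.sub_apply]
    field_simp
    simp [div_self (show v i0 ≠ 0 from hv0)]
  have : u - c • v = 0 := hw0
  linear_combination (norm := module) this

lemma mink_add_right {m : ℕ} (x y z : Fin m → ℝ) : mink z (x+y) = mink z x + mink z y := by
  rw [mink_comm, mink_add_left, mink_comm x z, mink_comm y z]

lemma mink_smul_right {m : ℕ} (c : ℝ) (x z : Fin m → ℝ) : mink z (c • x) = c * mink z x := by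
  rw [mink_comm, mink_smul_left, mink_comm x z]

lemma mink_single {m : ℕ} (v : Fin m → ℝ) (hm : 0 < m) :
    mink v (Pi.single (⟨0, hm⟩ : Fin m) 1) = -(v ⟨0,hm⟩) := by
  unfold mink
  rw [Finset.sum_eq_single (⟨0,hm⟩ : Fin m)]
  · simp
  · intro i _ hi
    have h : (i:ℕ) ≠ 0 := fun h => hi (Fin.ext h)
    simp [h, Pi.single_eq_of_ne (fun h => hi h)]
  · simp

lemma mem_minkOrtho_iff {m : ℕ} {v u : Fin m → ℝ} : u ∈ minkOrtho v ↔ mink v u = 0 := Iff.rfl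

noncomputable def omB {m : ℕ} (v : Fin m → ℝ) :
    (minkOrtho v × minkOrtho v) →ₗ[ℝ] (minkOrtho v × minkOrtho v) →ₗ[ℝ] ℝ :=
  LinearMap.mk₂ ℝ
    (fun p q => mink (p.1 : Fin m → ℝ) (q.2 : Fin m → ℝ)
      - mink (q.1 : Fin m → ℝ) (p.2 : Fin m → ℝ))
    (fun p p' q => by
      simp only [Prod.fst_add, Prod.snd_add, Submodule.coe_add, mink_add_left, mink_add_right]
      ring)
    (fun c p q => by
      simp only [Prod.smul_fst, Prod.smul_snd, SetLike.val_smul, mink_smul_left,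
        mink_smul_right, smul_eq_mul]
      ring)
    (fun p q q' => by
      simp only [Prod.fst_add, Prod.snd_add, Submodule.coe_add, mink_add_left, mink_add_right]
      ring)
    (fun c p q => by
      simp only [Prod.smul_fst, Prod.smul_snd, SetLike.val_smul, mink_smul_left,
        mink_smul_right, smul_eq_mul]
      ring)

lemma omB_apply {m : ℕ} (v : Fin m → ℝ) (p q : minkOrtho v × minkOrtho v) :
    omB v p q = mink (p.1 : Fin m → ℝ) (q.2 : Fin m → ℝ)
      - mink (q.1 : Fin m → ℝ) (p.2 : Fin m → ℝ) := rfl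

/-- In Minkowski space `ℝ^m` (`m ≥ 3`), let `v` be a nonzero null
vector, `P = v^⊥`, `ω₀` the alternating form on `P × P` given by
`ω₀((a₁,b₁),(a₂,b₂)) = g(a₁,b₂) − g(a₂,b₁)`, and `R ⊆ P × P` the subspace spanned by
`(v, 0)` and `(0, v)`.  Then `ω₀` descends to a well-defined nondegenerate alternating
bilinear form on the quotient `(P × P) / R`, and this quotient has dimension `2m − 4`. -/
theorem omega0_descends_to_symplectic {m : ℕ} (hm : 3 ≤ m)
    (v : Fin m → ℝ)
    (hvnull : mink v v = 0) (hv : v ≠ 0) :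
    ∃ Ω : ((minkOrtho v × minkOrtho v) ⧸
            (Submodule.span ℝ
              {(((⟨v, hvnull⟩ : minkOrtho v), (0 : minkOrtho v)) :
                  minkOrtho v × minkOrtho v),
               (((0 : minkOrtho v), (⟨v, hvnull⟩ : minkOrtho v)) :
                  minkOrtho v × minkOrtho v)})) →ₗ[ℝ]
          ((minkOrtho v × minkOrtho v) ⧸
            (Submodule.span ℝ
              {(((⟨v, hvnull⟩ : minkOrtho v), (0 : minkOrtho v)) :
                  minkOrtho v × minkOrtho v),
               (((0 : minkOrtho v), (⟨v, hvnull⟩ : minkOrtho v)) :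
                  minkOrtho v × minkOrtho v)})) →ₗ[ℝ] ℝ,
      (∀ p q : minkOrtho v × minkOrtho v,
        Ω (Submodule.Quotient.mk p) (Submodule.Quotient.mk q)
          = mink (p.1 : Fin m → ℝ) (q.2 : Fin m → ℝ)
            - mink (q.1 : Fin m → ℝ) (p.2 : Fin m → ℝ)) ∧
      (∀ x, Ω x x = 0) ∧
      (∀ x, (∀ y, Ω x y = 0) → x = 0) ∧
      finrank ℝ ((minkOrtho v × minkOrtho v) ⧸
        (Submodule.span ℝ
          {(((⟨v, hvnull⟩ : minkOrtho v), (0 : minkOrtho v)) :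
              minkOrtho v × minkOrtho v),
           (((0 : minkOrtho v), (⟨v, hvnull⟩ : minkOrtho v)) :
              minkOrtho v × minkOrtho v)})) = 2 * m - 4 := by
  have hm0 : 0 < m := by omega
  set g1 : minkOrtho v × minkOrtho v := ((⟨v, hvnull⟩ : minkOrtho v), (0 : minkOrtho v))
  set g2 : minkOrtho v × minkOrtho v := ((0 : minkOrtho v), (⟨v, hvnull⟩ : minkOrtho v))
  set R : Submodule ℝ (minkOrtho v × minkOrtho v) := Submodule.span ℝ {g1, g2} with hR
  have hBg1 : ∀ q, omB v g1 q = 0 := by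
    intro q
    show mink ((⟨v, hvnull⟩ : minkOrtho v) : Fin m → ℝ) (q.2 : Fin m → ℝ)
      - mink (q.1 : Fin m → ℝ) ((0 : minkOrtho v) : Fin m → ℝ) = 0
    rw [ZeroMemClass.coe_zero, mink_zero_right]
    have h2 : mink v (q.2 : Fin m → ℝ) = 0 := q.2.2
    show mink v _ - 0 = 0
    rw [h2, sub_zero]
  have hBg2 : ∀ q, omB v g2 q = 0 := by
    intro q
    show mink ((0 : minkOrtho v) : Fin m → ℝ) (q.2 : Fin m → ℝ)
      - mink (q.1 : Fin m → ℝ) ((⟨v, hvnull⟩ : minkOrtho v) : Fin m → ℝ) = 0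
    rw [ZeroMemClass.coe_zero, mink_zero_left]
    have h1 : mink v (q.1 : Fin m → ℝ) = 0 := q.1.2
    show 0 - mink (q.1 : Fin m → ℝ) v = 0
    rw [mink_comm _ v, h1, sub_zero]
  have hBr1 : ∀ q, omB v q g1 = 0 := by
    intro q
    show mink (q.1 : Fin m → ℝ) ((0 : minkOrtho v) : Fin m → ℝ)
      - mink ((⟨v, hvnull⟩ : minkOrtho v) : Fin m → ℝ) (q.2 : Fin m → ℝ) = 0
    rw [ZeroMemClass.coe_zero, mink_zero_right]
    have h2 : mink v (q.2 : Fin m → ℝ) = 0 := q.2.2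
    show 0 - mink v _ = 0
    rw [h2, sub_zero]
  have hBr2 : ∀ q, omB v q g2 = 0 := by
    intro q
    show mink (q.1 : Fin m → ℝ) ((⟨v, hvnull⟩ : minkOrtho v) : Fin m → ℝ)
      - mink ((0 : minkOrtho v) : Fin m → ℝ) (q.2 : Fin m → ℝ) = 0
    rw [ZeroMemClass.coe_zero, mink_zero_left]
    have h1 : mink v (q.1 : Fin m → ℝ) = 0 := q.1.2
    show mink (q.1 : Fin m → ℝ) v - 0 = 0
    rw [mink_comm _ v, h1, sub_zero]
  have h1 : R ≤ LinearMap.ker (omB v).flip := by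
    show Submodule.span ℝ {g1, g2} ≤ LinearMap.ker (omB v).flip
    rw [Submodule.span_le]
    rintro x (rfl | rfl)
    · exact LinearMap.mem_ker.mpr (LinearMap.ext fun q => hBr1 q)
    · exact LinearMap.mem_ker.mpr (LinearMap.ext fun q => hBr2 q)
  set F := Submodule.liftQ R (omB v).flip h1 with hF
  have h2 : R ≤ LinearMap.ker F.flip := by
    show Submodule.span ℝ {g1, g2} ≤ LinearMap.ker F.flip
    rw [Submodule.span_le]
    rintro x (rfl | rfl) <;>
    · refine LinearMap.mem_ker.mpr (LinearMap.ext fun y => ?_)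
      obtain ⟨q, rfl⟩ := Submodule.Quotient.mk_surjective R y
      show F (Submodule.Quotient.mk q) _ = 0
      rw [hF, Submodule.liftQ_apply]
      first
        | exact hBg1 q
        | exact hBg2 q
  refine ⟨Submodule.liftQ R F.flip h2, ?_, ?_, ?_, ?_⟩
  · intro p q
    rw [Submodule.liftQ_apply]
    show F (Submodule.Quotient.mk q) p = _
    rw [hF, Submodule.liftQ_apply]
    exact omB_apply v p q
  · intro x
    obtain ⟨p, rfl⟩ := Submodule.Quotient.mk_surjective R x
    rw [Submodule.liftQ_apply]
    show F (Submodule.Quotient.mk p) p = 0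
    rw [hF, Submodule.liftQ_apply]
    rw [LinearMap.flip_apply, omB_apply]; ring
  · intro x hx
    obtain ⟨p, rfl⟩ := Submodule.Quotient.mk_surjective R x
    have hB : ∀ q, omB v p q = 0 := by
      intro q
      have := hx (Submodule.Quotient.mk q)
      rw [Submodule.liftQ_apply] at this
      replace this : F (Submodule.Quotient.mk q) p = 0 := this
      rw [hF, Submodule.liftQ_apply] at this
      exact this
    -- p.1 is in the radical
    have hrad1 : ∀ w, mink v w = 0 → mink (p.1 : Fin m → ℝ) w = 0 := by
      intro w hw
      have := hB ((0 : minkOrtho v), (⟨w, hw⟩ : minkOrtho v))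
      rw [omB_apply] at this
      simpa [mink_zero_left] using this
    have hrad2 : ∀ w, mink v w = 0 → mink (p.2 : Fin m → ℝ) w = 0 := by
      intro w hw
      have := hB ((⟨w, hw⟩ : minkOrtho v), (0 : minkOrtho v))
      rw [omB_apply] at this
      rw [mink_comm]
      simpa [mink_zero_right] using this
    obtain ⟨c, hc⟩ := key_radical hm0 v hvnull hv (p.1 : Fin m → ℝ) p.1.2 hrad1
    obtain ⟨d, hd⟩ := key_radical hm0 v hvnull hv (p.2 : Fin m → ℝ) p.2.2 hrad2
    rw [Submodule.Quotient.mk_eq_zero]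
    have hp : p = c • g1 + d • g2 := by
      apply Prod.ext
      · show p.1 = c • (⟨v, hvnull⟩ : minkOrtho v) + d • (0 : minkOrtho v)
        apply Subtype.ext
        simpa using hc
      · show p.2 = c • (0 : minkOrtho v) + d • (⟨v, hvnull⟩ : minkOrtho v)
        apply Subtype.ext
        simpa using hd
    rw [hp]
    exact R.add_mem (R.smul_mem c (Submodule.subset_span (Set.mem_insert _ _)))
      (R.smul_mem d (Submodule.subset_span (Set.mem_insert_of_mem _ rfl)))
  · -- dimension count
    have hker : minkOrtho v = LinearMap.ker (minkL v) := by
      ext u; exact Iff.rfl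
    have hsurj : Function.Surjective (minkL v) := by
      intro r
      refine ⟨(r / (-(v ⟨0, hm0⟩))) • (Pi.single (⟨0, hm0⟩ : Fin m) (1:ℝ) : Fin m → ℝ), ?_⟩
      show mink v _ = r
      rw [mink_smul_right, mink_single v hm0]
      have := v0_ne hm0 v hvnull hv
      field_simp
    have hrange : LinearMap.range (minkL v) = ⊤ := LinearMap.range_eq_top.mpr hsurj
    have hdim : finrank ℝ (minkOrtho v) = m - 1 := by
      have := (minkL v).finrank_range_add_finrank_ker
      rw [hrange, finrank_top, Module.finrank_fin_fun, Module.finrank_self] at this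
      rw [hker]
      omega
    have hindep : LinearIndependent ℝ ![g1, g2] := by
      rw [LinearIndependent.pair_iff]
      intro s t hst
      have h1 : s • (⟨v, hvnull⟩ : minkOrtho v) + t • (0 : minkOrtho v) = 0 :=
        congrArg Prod.fst hst
      have h2 : s • (0 : minkOrtho v) + t • (⟨v, hvnull⟩ : minkOrtho v) = 0 :=
        congrArg Prod.snd hst
      simp only [smul_zero, add_zero, zero_add] at h1 h2
      have h1' : s • v = 0 := congrArg Subtype.val h1
      have h2' : t • v = 0 := congrArg Subtype.val h2
      constructor
      · rcases smul_eq_zero.mp h1' with h | h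
        · exact h
        · exact absurd h hv
      · rcases smul_eq_zero.mp h2' with h | h
        · exact h
        · exact absurd h hv
    have hRdim : finrank ℝ R = 2 := by
      have hs : ({g1, g2} : Set (minkOrtho v × minkOrtho v)) = Set.range ![g1, g2] := by
        ext x
        simp only [Set.mem_insert_iff, Set.mem_singleton_iff, Matrix.range_cons,
          Matrix.range_empty, Set.union_empty, Set.union_singleton, Set.mem_insert_iff,
          Set.mem_singleton_iff]
        tauto
      rw [hR, hs, finrank_span_eq_card hindep, Fintype.card_fin]
    have hprod : finrank ℝ (minkOrtho v × minkOrtho v) = (m - 1) + (m - 1) := by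
      rw [Module.finrank_prod, hdim]
    have hquot := Submodule.finrank_quotient_add_finrank R
    rw [hprod, hRdim] at hquot
    omega
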